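/- Let s ≥ 2 be an integer, let c_1 = 0 < c_2 < … < c_s = 1 be the s distinct real zeros of q_s, and let h ≠ 0 be a real number. Then the matrix A_s := M − P Q⁻¹ N arising from the Hermite–Obreschkoff formulas with pairs (s,0) and (s−1,1) coincides with the Runge–Kutta coefficient matrix of the s-stage Lobatto IIIA collocation method: for all i, j ∈ {1,…,s}, (A_s)_{i,j} = ∫_0^{c_i} ℓ_j(τ) dτ. In particular A_s does not depend on h. -/

import Mathlib

open Polynomial Matrix Finset

theorem poly_integral' {s : ℕ} (p : ℝ[X]) (hdeg : p.natDegree < s) (t : ℝ) :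
    (∫ τ in (0:ℝ)..t, p.eval τ) =
      ∑ m ∈ Finset.range s, p.coeff m / ((m : ℝ) + 1) * t ^ (m + 1) := by
  have key : ∀ x ∈ Set.uIcc (0:ℝ) t, HasDerivAt
      (fun y => ∑ m ∈ Finset.range s, p.coeff m / ((m : ℝ) + 1) * y ^ (m + 1))
      (p.eval x) x := by
    intro x _
    have hsum : HasDerivAt
        (fun y => ∑ m ∈ Finset.range s, p.coeff m / ((m : ℝ) + 1) * y ^ (m + 1))
        (∑ m ∈ Finset.range s, p.coeff m * x ^ m) x := by
      apply HasDerivAt.fun_sum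
      intro m _
      have h1 := (hasDerivAt_pow (m + 1) x).const_mul (p.coeff m / ((m : ℝ) + 1))
      convert h1 using 1
      rotate_left
      have hm : (m : ℝ) + 1 ≠ 0 := by positivity
      push_cast
      field_simp
      rfl
    rw [Polynomial.eval_eq_sum_range' hdeg]
    exact hsum
  rw [intervalIntegral.integral_eq_sub_of_hasDerivAt key
    ((Polynomial.continuous _).intervalIntegrable _ _)]
  simp

/-- Let `s ≥ 2`, let `c_1 = 0 < c_2 < … < c_s = 1` be the `s` distinct real zeros of
`q_s = d^(s-2)/dX^(s-2) (X^(s-1)(X-1)^(s-1))`, and let `h ≠ 0`. Then the matrix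
`A_s = M - P Q⁻¹ N` arising from the Hermite–Obreschkoff formulas with pairs `(s,0)` and
`(s-1,1)` coincides with the Runge–Kutta coefficient matrix of the `s`-stage Lobatto IIIA
collocation method: `(A_s)_{i,j} = ∫_0^{c_i} ℓ_j(τ) dτ` with `ℓ_j` the `j`-th Lagrange basis
polynomial for the nodes `c_1, …, c_s`. In particular `A_s` does not depend on `h`. -/
theorem hermite_obreschkoff_gives_lobattoIIIA (s : ℕ) (hs : 2 ≤ s)
    (c : Fin s → ℝ) (hmono : StrictMono c)
    (hc0 : c ⟨0, by omega⟩ = 0) (hc1 : c ⟨s - 1, by omega⟩ = 1)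
    (hroots : ∀ x : ℝ,
      (Polynomial.derivative^[s - 2]
          ((X : Polynomial ℝ) ^ (s - 1) * (X - 1) ^ (s - 1))).eval x = 0 ↔ ∃ i, x = c i)
    (h : ℝ) (hh : h ≠ 0)
    (M : Matrix (Fin s) (Fin s) ℝ)
    (hM : ∀ i j, M i j = if (j : ℕ) = 0 then c i else 0)
    (P : Matrix (Fin s) (Fin (s - 1)) ℝ)
    (hP : ∀ i j, P i j = -((c i * h) ^ ((j : ℕ) + 2)) / ((((j : ℕ) + 2).factorial : ℝ)))
    (Q : Matrix (Fin (s - 1)) (Fin (s - 1)) ℝ)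
    (hQ : ∀ i j, Q i j = -(1 / (s : ℝ)) *
      (c ⟨(i : ℕ) + 1, by have := i.isLt; omega⟩ * h) ^ ((j : ℕ) + 2) /
        ((((j : ℕ) + 1).factorial : ℝ)))
    (N : Matrix (Fin (s - 1)) (Fin s) ℝ)
    (hN : ∀ i j, N i j =
      if (j : ℕ) = 0 then c ⟨(i : ℕ) + 1, by have := i.isLt; omega⟩ / (s : ℝ)
      else if (j : ℕ) = (i : ℕ) + 1 then
        -(c ⟨(i : ℕ) + 1, by have := i.isLt; omega⟩) / (s : ℝ)
      else 0)
    (A : Matrix (Fin s) (Fin s) ℝ) (hA : A = M - P * Q⁻¹ * N) :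
    ∀ i j, A i j = ∫ τ in (0 : ℝ)..(c i),
      ∏ l ∈ Finset.univ.erase j, (τ - c l) / (c j - c l) := by
  have hinj : Function.Injective c := hmono.injective
  have hs0 : (s : ℝ) ≠ 0 := by positivity
  -- Lagrange basis polynomials
  set L : Fin s → ℝ[X] := fun j => Lagrange.basis Finset.univ c j with hLdef
  have hdeg : ∀ j, (L j).natDegree < s := by
    intro j
    have := Lagrange.natDegree_basis (Set.injOn_of_injective hinj) (Finset.mem_univ j)
    simp only [hLdef]
    rw [this]
    simp only [Finset.card_univ, Fintype.card_fin]
    omega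
  have hevalL : ∀ (j i : Fin s), (L j).eval (c i) = if i = j then 1 else 0 := by
    intro j i
    by_cases hij : i = j
    · subst hij
      simp only [if_pos rfl, hLdef]
      exact Lagrange.eval_basis_self (Set.injOn_of_injective hinj) (Finset.mem_univ i)
    · simp only [if_neg hij, hLdef]
      exact Lagrange.eval_basis_of_ne (fun e => hij e.symm) (Finset.mem_univ i)
  have hinteg : ∀ (j : Fin s) (τ : ℝ),
      (∏ l ∈ Finset.univ.erase j, (τ - c l) / (c j - c l)) = (L j).eval τ := by
    intro j τ
    simp only [hLdef, Lagrange.basis, eval_prod, Lagrange.basisDivisor, eval_mul, eval_C,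
      eval_sub, eval_X]
    exact Finset.prod_congr rfl fun l _ => (div_eq_inv_mul _ _)
  -- the matrix W = Q⁻¹ * N
  set W : Matrix (Fin (s - 1)) (Fin s) ℝ :=
    fun k j => (L j).coeff ((k : ℕ) + 1) * (((k : ℕ) + 1).factorial : ℝ) / h ^ ((k : ℕ) + 2)
    with hWdef
  -- positivity of internal nodes
  have hcpos : ∀ i : Fin (s - 1), c ⟨(i : ℕ) + 1, by have := i.isLt; omega⟩ ≠ 0 := by
    intro i
    have : c ⟨0, by omega⟩ < c ⟨(i : ℕ) + 1, by have := i.isLt; omega⟩ :=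
      hmono (by simp [Fin.lt_def])
    rw [hc0] at this
    exact ne_of_gt this
  -- coeff 0 of L j
  have hcoeff0 : ∀ j : Fin s, (L j).coeff 0 = if (j : ℕ) = 0 then 1 else 0 := by
    intro j
    have he := hevalL j ⟨0, by omega⟩
    rw [hc0] at he
    rw [Polynomial.coeff_zero_eq_eval_zero, he]
    by_cases hj : (j : ℕ) = 0
    · rw [if_pos hj, if_pos (by exact Fin.ext hj.symm)]
    · rw [if_neg hj, if_neg (fun e => hj (by simpa using congrArg Fin.val e.symm))]
  -- Q is invertible
  have hQdet : IsUnit Q.det := by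
    set x : Fin (s - 1) → ℝ := fun i => c ⟨(i : ℕ) + 1, by have := i.isLt; omega⟩ * h with hx
    have hxinj : Function.Injective x := by
      intro a b hab
      have : c ⟨(a : ℕ) + 1, by have := a.isLt; omega⟩
          = c ⟨(b : ℕ) + 1, by have := b.isLt; omega⟩ := by
        simp only [hx, mul_left_inj' hh] at hab
        tauto
      have := hinj this
      have : (a : ℕ) + 1 = (b : ℕ) + 1 := congrArg Fin.val this
      exact Fin.ext (by omega)
    have hxne : ∀ i, x i ≠ 0 := fun i => mul_ne_zero (hcpos i) hh
    have hfac : Q = Matrix.diagonal (fun i => -(1 / (s : ℝ)) * (x i) ^ 2) *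
        (Matrix.vandermonde x * Matrix.diagonal (fun j : Fin (s - 1) => ((((j : ℕ) + 1).factorial : ℝ))⁻¹)) := by
      ext i j
      rw [← Matrix.mul_assoc, Matrix.mul_diagonal, Matrix.diagonal_mul, hQ]
      simp only [Matrix.vandermonde_apply]
      rw [show (j : ℕ) + 2 = 2 + (j : ℕ) by omega, pow_add, div_eq_mul_inv]
      ring
    rw [hfac, Matrix.det_mul, Matrix.det_mul, Matrix.det_diagonal, Matrix.det_diagonal,
      Matrix.det_vandermonde]
    refine (IsUnit.mul ?_ (IsUnit.mul ?_ ?_))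
    · rw [isUnit_iff_ne_zero]
      exact Finset.prod_ne_zero_iff.mpr fun i _ =>
        mul_ne_zero (neg_ne_zero.mpr (by positivity)) (pow_ne_zero _ (hxne i))
    · rw [isUnit_iff_ne_zero]
      refine Finset.prod_ne_zero_iff.mpr fun i _ =>
        Finset.prod_ne_zero_iff.mpr fun j hj => sub_ne_zero_of_ne fun e => ?_
      have := hxinj e
      subst this
      simp at hj
    · rw [isUnit_iff_ne_zero]
      exact Finset.prod_ne_zero_iff.mpr fun j _ =>
        inv_ne_zero (Nat.cast_ne_zero.mpr (Nat.factorial_ne_zero _))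
  -- Q * W = N
  have hQW : Q * W = N := by
    ext i j
    set cv : ℝ := c ⟨(i : ℕ) + 1, by have := i.isLt; omega⟩ with hcv
    have step : ∀ k : Fin (s - 1), Q i k * W k j
        = -(1 / (s : ℝ)) * ((L j).coeff ((k : ℕ) + 1) * cv ^ ((k : ℕ) + 2)) := by
      intro k
      rw [hQ, hWdef]
      have hfac : ((((k : ℕ) + 1).factorial : ℝ)) ≠ 0 :=
        Nat.cast_ne_zero.mpr (Nat.factorial_ne_zero _)
      have hhp : h ^ ((k : ℕ) + 2) ≠ 0 := pow_ne_zero _ hh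
      rw [mul_pow]
      field_simp
      ring
    rw [Matrix.mul_apply]
    rw [Finset.sum_congr rfl (fun k _ => step k)]
    rw [← Finset.mul_sum]
    have hsum : ∑ k : Fin (s - 1), (L j).coeff ((k : ℕ) + 1) * cv ^ ((k : ℕ) + 2)
        = cv * (L j).eval cv - (L j).coeff 0 * cv := by
      rw [Fin.sum_univ_eq_sum_range (fun k => (L j).coeff (k + 1) * cv ^ (k + 2))]
      have h1 : (L j).eval cv = ∑ m ∈ Finset.range s, (L j).coeff m * cv ^ m :=
        Polynomial.eval_eq_sum_range' (hdeg j) cv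
      have h2 : ∑ m ∈ Finset.range s, (L j).coeff m * cv ^ (m + 1)
          = ∑ k ∈ Finset.range (s - 1), (L j).coeff (k + 1) * cv ^ (k + 2) + (L j).coeff 0 * cv := by
        rw [show s = (s - 1) + 1 by omega, Finset.sum_range_succ']
        simp
      have h3 : ∑ m ∈ Finset.range s, (L j).coeff m * cv ^ (m + 1)
          = cv * (L j).eval cv := by
        rw [h1, Finset.mul_sum]
        exact Finset.sum_congr rfl fun m _ => by ring
      rw [← h3, h2]
      ring
    rw [hsum, hN]
    have hE : (L j).eval cv = if (j : ℕ) = (i : ℕ) + 1 then 1 else 0 := by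
      rw [hcv, hevalL]
      by_cases hj : (j : ℕ) = (i : ℕ) + 1
      · rw [if_pos hj, if_pos (Fin.ext hj.symm)]
      · rw [if_neg hj, if_neg (fun e => hj (by simpa using congrArg Fin.val e.symm))]
    rw [hE, hcoeff0]
    by_cases hj0 : (j : ℕ) = 0
    · rw [if_pos hj0, if_pos hj0, if_neg (by omega)]
      field_simp
      rw [hcv]; ring
    · rw [if_neg hj0, if_neg hj0]
      by_cases hji : (j : ℕ) = (i : ℕ) + 1
      · rw [if_pos hji, if_pos hji]
        field_simp
        rw [hcv]; ring
      · rw [if_neg hji, if_neg hji]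
        ring
  -- P * W i j = M i j - integral
  have hPW : ∀ i j, (P * W) i j
      = M i j - ∫ τ in (0 : ℝ)..(c i), (L j).eval τ := by
    intro i j
    rw [poly_integral' (L j) (hdeg j) (c i)]
    have step : ∀ k : Fin (s - 1), P i k * W k j
        = -((L j).coeff ((k : ℕ) + 1) / (((k : ℕ) : ℝ) + 2) * c i ^ ((k : ℕ) + 2)) := by
      intro k
      rw [hP, hWdef]
      have hfac1 : ((((k : ℕ) + 1).factorial : ℝ)) ≠ 0 :=
        Nat.cast_ne_zero.mpr (Nat.factorial_ne_zero _)
      have hfac2 : (((k : ℕ) + 2).factorial : ℝ)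
          = (((k : ℕ) : ℝ) + 2) * (((k : ℕ) + 1).factorial : ℝ) := by
        rw [show (k : ℕ) + 2 = ((k : ℕ) + 1) + 1 by omega, Nat.factorial_succ]
        push_cast; ring
      have hk2 : (((k : ℕ) : ℝ) + 2) ≠ 0 := by positivity
      have hhp : h ^ ((k : ℕ) + 2) ≠ 0 := pow_ne_zero _ hh
      rw [mul_pow, hfac2]
      field_simp
    rw [Matrix.mul_apply, Finset.sum_congr rfl (fun k _ => step k)]
    have h2 : ∑ m ∈ Finset.range s, (L j).coeff m / ((m : ℝ) + 1) * c i ^ (m + 1)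
        = ∑ k ∈ Finset.range (s - 1),
            (L j).coeff (k + 1) / (((k : ℕ) : ℝ) + 2) * c i ^ (k + 2) + (L j).coeff 0 * c i := by
      rw [show s = (s - 1) + 1 by omega, Finset.sum_range_succ']
      congr 1
      · exact Finset.sum_congr rfl fun k _ => by push_cast; ring
      · norm_num
    rw [h2]
    have hM0 : M i j = (L j).coeff 0 * c i := by
      rw [hM, hcoeff0]
      by_cases hj : (j : ℕ) = 0 <;> simp [hj]
    rw [hM0]
    rw [Fin.sum_univ_eq_sum_range
      (fun k => -((L j).coeff (k + 1) / ((k : ℝ) + 2) * c i ^ (k + 2)))]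
    rw [Finset.sum_neg_distrib]
    ring
  -- conclusion
  intro i j
  have hW : Q⁻¹ * N = W := by
    rw [← hQW, ← Matrix.mul_assoc, Matrix.nonsing_inv_mul Q hQdet, Matrix.one_mul]
  rw [hA]
  have : (M - P * Q⁻¹ * N) i j = M i j - (P * W) i j := by
    rw [Matrix.sub_apply, Matrix.mul_assoc, hW]
  rw [this, hPW]
  simp only [hinteg]
  ring
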